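/- arXiv:2103.11572 — 3 statements merged into one kernel-verified Lean document; each statement's English description precedes it below -/
import Mathlib

section
/- Let d ≥ 2 be an integer, A a real n×n matrix, B a real n×m matrix, K, L real m×n matrices, Q₁, Q₂ symmetric real n×n matrices, R a symmetric real m×m matrix, and P₁, P₂ symmetric real n×n matrices. Define the Kronecker-structured matrices Ã = I_d ⊗ A, B̃ = I_d ⊗ B, K̃ = I_d ⊗ (K − L) + J_d ⊗ L, 𝐐 = I_d ⊗ (Q₁ + d·Q₂) − J_d ⊗ Q₂, 𝐑 = I_d ⊗ R, and P̃ = I_d ⊗ (P₁ − P₂) + J_d ⊗ P₂. If P̃ = (Ã + B̃K̃)ᵀ P̃ (Ã + B̃K̃) + 𝐐 + K̃ᵀ𝐑K̃, then ΔP := P₁ − P₂ satisfies ΔP = (A + B·ΔK)ᵀ ΔP (A + B·ΔK) + (Q₁ + d·Q₂) + ΔKᵀ R ΔK, where ΔK := K − L. -/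
open Matrix
open scoped Kronecker

def allOnes (d : ℕ) : Matrix (Fin d) (Fin d) ℝ := Matrix.of fun _ _ => 1

def uvec (d : ℕ) : Matrix (Fin d) (Fin 1) ℝ :=
  Matrix.of fun i _ => if (i : ℕ) = 0 then 1 else if (i : ℕ) = 1 then -1 else 0

lemma allOnes_transpose (d : ℕ) : (allOnes d)ᵀ = allOnes d := by
  ext i j; simp [allOnes, transpose_apply]

lemma allOnes_mul_uvec {d : ℕ} (hd : 2 ≤ d) : allOnes d * uvec d = 0 := by
  ext i j
  simp only [mul_apply, allOnes, uvec, of_apply, Matrix.zero_apply, one_mul]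
  have : ∀ k : Fin d, (if (k : ℕ) = 0 then (1:ℝ) else if (k : ℕ) = 1 then -1 else 0)
      = (if k = (⟨0, by omega⟩ : Fin d) then (1:ℝ) else 0)
        + (if k = (⟨1, by omega⟩ : Fin d) then (-1:ℝ) else 0) := by
    intro k
    by_cases h0 : (k : ℕ) = 0
    · simp [h0, Fin.ext_iff]
    · by_cases h1 : (k : ℕ) = 1 <;> simp [h0, h1, Fin.ext_iff]
  simp_rw [this, Finset.sum_add_distrib, Finset.sum_ite_eq', Finset.mem_univ, if_true]
  ring

lemma push1 {d p q r : ℕ} (X : Matrix (Fin p) (Fin q) ℝ) (Z : Matrix (Fin q) (Fin r) ℝ) :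
    ((1 : Matrix (Fin d) (Fin d) ℝ) ⊗ₖ X) * (uvec d ⊗ₖ Z) = uvec d ⊗ₖ (X * Z) := by
  rw [← mul_kronecker_mul, Matrix.one_mul]

lemma pushJ {d p q r : ℕ} (hd : 2 ≤ d) (X Y : Matrix (Fin p) (Fin q) ℝ)
    (Z : Matrix (Fin q) (Fin r) ℝ) :
    ((1 : Matrix (Fin d) (Fin d) ℝ) ⊗ₖ X + allOnes d ⊗ₖ Y) * (uvec d ⊗ₖ Z)
      = uvec d ⊗ₖ (X * Z) := by
  rw [Matrix.add_mul, push1, ← mul_kronecker_mul, allOnes_mul_uvec hd, zero_kronecker, add_zero]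

lemma pushJsub {d p q r : ℕ} (hd : 2 ≤ d) (X Y : Matrix (Fin p) (Fin q) ℝ)
    (Z : Matrix (Fin q) (Fin r) ℝ) :
    ((1 : Matrix (Fin d) (Fin d) ℝ) ⊗ₖ X - allOnes d ⊗ₖ Y) * (uvec d ⊗ₖ Z)
      = uvec d ⊗ₖ (X * Z) := by
  rw [Matrix.sub_mul, push1, ← mul_kronecker_mul, allOnes_mul_uvec hd, zero_kronecker, sub_zero]

lemma pushJ0 {d p q r : ℕ} (hd : 2 ≤ d) (Y : Matrix (Fin p) (Fin q) ℝ)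
    (Z : Matrix (Fin q) (Fin r) ℝ) :
    (allOnes d ⊗ₖ Y) * (uvec d ⊗ₖ Z) = 0 := by
  rw [← mul_kronecker_mul, allOnes_mul_uvec hd, zero_kronecker]

lemma uvec_kron_inj {d p q : ℕ} (hd : 2 ≤ d) {X Y : Matrix (Fin p) (Fin q) ℝ}
    (h : uvec d ⊗ₖ X = uvec d ⊗ₖ Y) : X = Y := by
  ext a b
  have := congrFun (congrFun h ((⟨0, by omega⟩ : Fin d), a)) ((0 : Fin 1), b)
  simpa [uvec, kroneckerMap_apply] using this

theorem stmt_10 {n m : ℕ} (d : ℕ) (hd : 2 ≤ d)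
    (A : Matrix (Fin n) (Fin n) ℝ) (B : Matrix (Fin n) (Fin m) ℝ)
    (K L : Matrix (Fin m) (Fin n) ℝ)
    (Q₁ Q₂ : Matrix (Fin n) (Fin n) ℝ) (hQ₁ : Q₁.IsSymm) (hQ₂ : Q₂.IsSymm)
    (R : Matrix (Fin m) (Fin m) ℝ) (hR : R.IsSymm)
    (P₁ P₂ : Matrix (Fin n) (Fin n) ℝ) (hP₁ : P₁.IsSymm) (hP₂ : P₂.IsSymm)
    (hLyap :
      (1 : Matrix (Fin d) (Fin d) ℝ) ⊗ₖ (P₁ - P₂) + allOnes d ⊗ₖ P₂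
      = ((1 : Matrix (Fin d) (Fin d) ℝ) ⊗ₖ A
          + ((1 : Matrix (Fin d) (Fin d) ℝ) ⊗ₖ B)
            * ((1 : Matrix (Fin d) (Fin d) ℝ) ⊗ₖ (K - L) + allOnes d ⊗ₖ L))ᵀ
        * ((1 : Matrix (Fin d) (Fin d) ℝ) ⊗ₖ (P₁ - P₂) + allOnes d ⊗ₖ P₂)
        * ((1 : Matrix (Fin d) (Fin d) ℝ) ⊗ₖ A
          + ((1 : Matrix (Fin d) (Fin d) ℝ) ⊗ₖ B)
            * ((1 : Matrix (Fin d) (Fin d) ℝ) ⊗ₖ (K - L) + allOnes d ⊗ₖ L))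
        + ((1 : Matrix (Fin d) (Fin d) ℝ) ⊗ₖ (Q₁ + (d : ℝ) • Q₂) - allOnes d ⊗ₖ Q₂)
        + ((1 : Matrix (Fin d) (Fin d) ℝ) ⊗ₖ (K - L) + allOnes d ⊗ₖ L)ᵀ
          * ((1 : Matrix (Fin d) (Fin d) ℝ) ⊗ₖ R)
          * ((1 : Matrix (Fin d) (Fin d) ℝ) ⊗ₖ (K - L) + allOnes d ⊗ₖ L)) :
    P₁ - P₂ = (A + B * (K - L))ᵀ * (P₁ - P₂) * (A + B * (K - L))
      + (Q₁ + (d : ℝ) • Q₂) + (K - L)ᵀ * R * (K - L) := by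
  have h := congrArg (fun M => M * (uvec d ⊗ₖ (1 : Matrix (Fin n) (Fin n) ℝ))) hLyap
  simp only [Matrix.transpose_add, Matrix.transpose_mul, ← kroneckerMap_transpose,
    Matrix.transpose_one, allOnes_transpose] at h
  simp only [Matrix.add_mul, Matrix.sub_mul, Matrix.mul_add, Matrix.mul_assoc, push1,
    pushJ0 hd, Matrix.mul_zero, Matrix.zero_mul, add_zero, zero_add, sub_zero,
    Matrix.mul_one] at h
  simp only [← kronecker_add] at h
  have h2 := uvec_kron_inj hd h
  refine h2.trans ?_
  simp only [Matrix.transpose_add, Matrix.transpose_sub, Matrix.transpose_smul,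
    Matrix.transpose_mul, Matrix.add_mul, Matrix.mul_add,
    Matrix.sub_mul, Matrix.mul_sub, Matrix.mul_assoc]
  abel
end

section
/- Let d ≥ 2 be an integer, A a real n×n matrix, B a real n×m matrix, and K, L real m×n matrices. Define Ã = I_d ⊗ A, B̃ = I_d ⊗ B, and K̃ = I_d ⊗ (K − L) + J_d ⊗ L. If Ã + B̃K̃ is Schur stable, then A + B(K − L) is Schur stable. -/
open Matrix
open scoped Kronecker

/-- A real square matrix is Schur stable if all of its complex eigenvalues have
modulus strictly less than one. -/
def SchurStable {N : Type*} [Fintype N] [DecidableEq N] (M : Matrix N N ℝ) : Prop :=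
  ∀ μ ∈ spectrum ℂ (M.map (algebraMap ℝ ℂ)), ‖μ‖ < 1

lemma mem_spec_iff {N : Type*} [Fintype N] [DecidableEq N] (M : Matrix N N ℂ) (μ : ℂ) :
    μ ∈ spectrum ℂ M ↔ ∃ v ≠ 0, M.mulVec v = μ • v := by
  rw [spectrum.mem_iff, Matrix.isUnit_iff_isUnit_det, isUnit_iff_ne_zero, not_ne_iff,
    show algebraMap ℂ (Matrix N N ℂ) μ - M = -(M - μ • 1) by
      simp [Algebra.algebraMap_eq_smul_one],
    det_neg, mul_eq_zero]
  simp only [pow_ne_zero _ (by norm_num : (-1:ℂ) ≠ 0), false_or]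
  rw [← Matrix.exists_mulVec_eq_zero_iff]
  constructor <;> rintro ⟨v, hv, h⟩ <;> refine ⟨v, hv, ?_⟩
  · have := h
    rw [sub_mulVec, sub_eq_zero] at this
    simpa [smul_mulVec] using this
  · rw [sub_mulVec, h]
    simp [smul_mulVec]

theorem stmt_11 {n m : ℕ} (d : ℕ) (hd : 2 ≤ d)
    (A : Matrix (Fin n) (Fin n) ℝ) (B : Matrix (Fin n) (Fin m) ℝ)
    (K L : Matrix (Fin m) (Fin n) ℝ)
    (hstab : SchurStable
      ((1 : Matrix (Fin d) (Fin d) ℝ) ⊗ₖ A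
        + ((1 : Matrix (Fin d) (Fin d) ℝ) ⊗ₖ B)
          * ((1 : Matrix (Fin d) (Fin d) ℝ) ⊗ₖ (K - L) + allOnes d ⊗ₖ L))) :
    SchurStable (A + B * (K - L)) := by
  intro μ hμ
  set S : Matrix (Fin n) (Fin n) ℝ := A + B * (K - L) with hS
  set T : Matrix (Fin n) (Fin n) ℝ := B * L with hT
  have hBig : (1 : Matrix (Fin d) (Fin d) ℝ) ⊗ₖ A
        + ((1 : Matrix (Fin d) (Fin d) ℝ) ⊗ₖ B)
          * ((1 : Matrix (Fin d) (Fin d) ℝ) ⊗ₖ (K - L) + allOnes d ⊗ₖ L)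
      = (1 : Matrix (Fin d) (Fin d) ℝ) ⊗ₖ S + allOnes d ⊗ₖ T := by
    rw [Matrix.mul_add, ← Matrix.mul_kronecker_mul, ← Matrix.mul_kronecker_mul,
      ← add_assoc, Matrix.one_mul, Matrix.one_mul, ← Matrix.kronecker_add]
  obtain ⟨v, hv, hMv⟩ := (mem_spec_iff _ μ).1 hμ
  -- the signed indicator vector
  set a : Fin d := ⟨0, by omega⟩
  set b : Fin d := ⟨1, by omega⟩
  have hab : a ≠ b := by simp [a, b, Fin.ext_iff]
  set x : Fin d → ℂ := fun k => (if k = a then (1:ℂ) else 0) - (if k = b then 1 else 0) with hx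
  have hxa : x a = 1 := by simp [hx, hab]
  have hx0 : ∑ k, x k = 0 := by
    simp [hx, Finset.sum_sub_distrib]
  clear_value x
  apply hstab μ
  rw [hBig, mem_spec_iff]
  refine ⟨fun p => x p.1 * v p.2, ?_, ?_⟩
  · obtain ⟨j, hj⟩ := Function.ne_iff.1 hv
    exact Function.ne_iff.2 ⟨(a, j), by simpa [hxa] using hj⟩
  · funext p
    obtain ⟨i, j⟩ := p
    have hMvj : ∑ l, algebraMap ℝ ℂ (S j l) * v l = μ * v j := by
      have := congrFun hMv j
      simpa [Matrix.mulVec, dotProduct, Matrix.map_apply] using this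
    simp only [Matrix.mulVec, dotProduct, Fintype.sum_prod_type, Matrix.map_apply,
      Matrix.add_apply, Matrix.kroneckerMap_apply, Matrix.one_apply, allOnes, Matrix.of_apply,
      map_add, _root_.map_mul, _root_.map_one, _root_.map_zero, apply_ite, add_mul, ite_mul, one_mul, zero_mul,
      Pi.smul_apply, smul_eq_mul, Finset.sum_add_distrib]
    have h1 : ∑ k, ∑ l, (if i = k then algebraMap ℝ ℂ (S j l) * (x k * v l) else 0)
        = μ * (x i * v j) := by
      rw [Finset.sum_comm]
      simp only [Finset.sum_ite_eq, Finset.mem_univ, if_true]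
      calc ∑ l, algebraMap ℝ ℂ (S j l) * (x i * v l)
          = x i * ∑ l, algebraMap ℝ ℂ (S j l) * v l := by
            rw [Finset.mul_sum]; congr 1; ext l; ring
        _ = μ * (x i * v j) := by rw [hMvj]; ring
    have h2 : ∑ k, ∑ l, algebraMap ℝ ℂ (T j l) * (x k * v l) = 0 := by
      have : ∀ k, ∑ l, algebraMap ℝ ℂ (T j l) * (x k * v l)
          = x k * ∑ l, algebraMap ℝ ℂ (T j l) * v l := by
        intro k; rw [Finset.mul_sum]; congr 1; ext l; ring
      simp only [this, ← Finset.sum_mul, hx0, zero_mul]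
    rw [h1, h2, add_zero]
end

section
/- Let d ≥ 2 be an integer, A a real n×n matrix, B a real n×m matrix, R a symmetric positive definite real m×m matrix, and P₁, P₂ symmetric real n×n matrices such that P̃ = I_d ⊗ (P₁ − P₂) + J_d ⊗ P₂ is positive semidefinite. Define Y₁ = R + Bᵀ P₁ B, Y₂ = Bᵀ P₂ B, Z₁ = Bᵀ P₁ A, Z₂ = Bᵀ P₂ A, and the structured matrices H̃₂₂ = I_d ⊗ (Y₁ − Y₂) + J_d ⊗ Y₂ and H̃₂₁ = I_d ⊗ (Z₁ − Z₂) + J_d ⊗ Z₂. Then H̃₂₂ is positive definite (in particular Y₁ − Y₂, Y₁ + (d−2)·Y₂, Y₁ + (d−1)·Y₂, and Y₁ − (d−1)·Y₂(Y₁ + (d−2)·Y₂)⁻¹Y₂ are all invertible), and setting F = (Y₁ − (d−1)·Y₂(Y₁ + (d−2)·Y₂)⁻¹Y₂)⁻¹ and G = (Y₁ + (d−1)·Y₂)⁻¹Y₂(Y₁ − Y₂)⁻¹, one has −H̃₂₂⁻¹ H̃₂₁ = I_d ⊗ (K − L) + J_d ⊗ L with K = −F·Z₁ + (d−1)·G·Z₂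 and L = −F·Z₂ + G·Z₁ + (d−2)·G·Z₂. -/
open Matrix
open scoped Kronecker

lemma kron_quad {d n : ℕ} (A : Matrix (Fin d) (Fin d) ℝ) (B : Matrix (Fin n) (Fin n) ℝ)
    (c : Fin d → ℝ) (v : Fin n → ℝ) :
    (fun p : Fin d × Fin n => c p.1 * v p.2) ⬝ᵥ ((A ⊗ₖ B) *ᵥ fun p => c p.1 * v p.2)
      = (c ⬝ᵥ A *ᵥ c) * (v ⬝ᵥ B *ᵥ v) := by
  simp only [dotProduct, mulVec]
  rw [Finset.sum_mul_sum]
  simp only [kroneckerMap_apply, Fintype.sum_prod_type, Finset.mul_sum, Finset.sum_mul]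
  refine Finset.sum_congr rfl fun i _ => Finset.sum_congr rfl fun k _ => ?_
  rw [Finset.sum_comm]
  exact Finset.sum_congr rfl fun l _ => Finset.sum_congr rfl fun j _ => by ring

lemma allOnes_mul_allOnes (d : ℕ) : allOnes d * allOnes d = (d : ℝ) • allOnes d := by
  ext i j
  simp [allOnes, Matrix.mul_apply]

lemma allOnes_quad {d : ℕ} (c : Fin d → ℝ) :
    c ⬝ᵥ allOnes d *ᵥ c = (∑ i, c i) ^ 2 := by
  simp [allOnes, dotProduct, mulVec, ← Finset.sum_mul, sq]

lemma posDef_one_kronecker {d m : ℕ} {R : Matrix (Fin m) (Fin m) ℝ} (hR : R.PosDef) :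
    ((1 : Matrix (Fin d) (Fin d) ℝ) ⊗ₖ R).PosDef := by
  rw [posDef_iff_dotProduct_mulVec]
  constructor
  · show _ = _
    rw [conjTranspose_eq_transpose_of_trivial, ← kroneckerMap_transpose]
    have h1 : (1 : Matrix (Fin d) (Fin d) ℝ)ᵀ = 1 := Matrix.transpose_one
    have h2 : Rᵀ = R := by
      have := hR.1
      rwa [IsHermitian, conjTranspose_eq_transpose_of_trivial] at this
    rw [h1, h2]
  · intro x hx
    have key : star x ⬝ᵥ ((1 : Matrix (Fin d) (Fin d) ℝ) ⊗ₖ R) *ᵥ x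
        = ∑ i : Fin d, (fun k => x (i, k)) ⬝ᵥ R *ᵥ (fun k => x (i, k)) := by
      simp only [star_trivial, dotProduct, mulVec, kroneckerMap_apply,
        Fintype.sum_prod_type, Matrix.one_apply]
      refine Finset.sum_congr rfl fun i _ => Finset.sum_congr rfl fun k _ => ?_
      congr 1
      rw [Finset.sum_comm]
      simp [Finset.mul_sum, ite_mul, Finset.sum_ite_eq' , mul_comm]
    rw [key]
    obtain ⟨⟨i0, k0⟩, hik⟩ : ∃ p, x p ≠ 0 := by
      by_contra h
      push_neg at h
      exact hx (funext fun p => h p)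
    refine Finset.sum_pos' (fun i _ => ?_) ⟨i0, Finset.mem_univ _, ?_⟩
    · simpa using hR.posSemidef.dotProduct_mulVec_nonneg (fun k => x (i, k))
    · have hx0 : (fun k => x (i0, k)) ≠ 0 := fun h => hik (congrFun h k0)
      simpa using (posDef_iff_dotProduct_mulVec.mp hR).2 hx0

lemma posDef_smul {m : ℕ} {M : Matrix (Fin m) (Fin m) ℝ} (hM : M.PosDef) {c : ℝ}
    (hc : 0 < c) : (c • M).PosDef := by
  rw [posDef_iff_dotProduct_mulVec]
  constructor
  · show _ = _
    rw [conjTranspose_eq_transpose_of_trivial, Matrix.transpose_smul]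
    have h2 : Mᵀ = M := by
      have := hM.1
      rwa [IsHermitian, conjTranspose_eq_transpose_of_trivial] at this
    rw [h2]
  · intro x hx
    have : star x ⬝ᵥ (c • M) *ᵥ x = c * (star x ⬝ᵥ M *ᵥ x) := by
      rw [Matrix.smul_mulVec, dotProduct_smul, smul_eq_mul]
    rw [this]
    exact mul_pos hc (hM.dotProduct_mulVec_pos hx)

lemma kronecker_neg' {d e f g : ℕ} (A : Matrix (Fin d) (Fin e) ℝ)
    (M : Matrix (Fin f) (Fin g) ℝ) : A ⊗ₖ (-M) = -(A ⊗ₖ M) := by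
  ext ⟨i, k⟩ ⟨j, l⟩
  simp [kroneckerMap_apply]

theorem stmt_18 {n m : ℕ} (d : ℕ) (hd : 2 ≤ d)
    (A : Matrix (Fin n) (Fin n) ℝ) (B : Matrix (Fin n) (Fin m) ℝ)
    (R : Matrix (Fin m) (Fin m) ℝ) (hR : R.PosDef)
    (P₁ P₂ : Matrix (Fin n) (Fin n) ℝ) (hP₁ : P₁.IsSymm) (hP₂ : P₂.IsSymm)
    (hP : ((1 : Matrix (Fin d) (Fin d) ℝ) ⊗ₖ (P₁ - P₂) + allOnes d ⊗ₖ P₂).PosSemidef)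
    (Y₁ Y₂ : Matrix (Fin m) (Fin m) ℝ) (Z₁ Z₂ : Matrix (Fin m) (Fin n) ℝ)
    (hY₁ : Y₁ = R + Bᵀ * P₁ * B) (hY₂ : Y₂ = Bᵀ * P₂ * B)
    (hZ₁ : Z₁ = Bᵀ * P₁ * A) (hZ₂ : Z₂ = Bᵀ * P₂ * A)
    (H22 : Matrix (Fin d × Fin m) (Fin d × Fin m) ℝ)
    (H21 : Matrix (Fin d × Fin m) (Fin d × Fin n) ℝ)
    (hH22 : H22 = (1 : Matrix (Fin d) (Fin d) ℝ) ⊗ₖ (Y₁ - Y₂) + allOnes d ⊗ₖ Y₂)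
    (hH21 : H21 = (1 : Matrix (Fin d) (Fin d) ℝ) ⊗ₖ (Z₁ - Z₂) + allOnes d ⊗ₖ Z₂)
    (F G : Matrix (Fin m) (Fin m) ℝ)
    (hF : F = (Y₁ - ((d : ℝ) - 1) • (Y₂ * (Y₁ + ((d : ℝ) - 2) • Y₂)⁻¹ * Y₂))⁻¹)
    (hG : G = (Y₁ + ((d : ℝ) - 1) • Y₂)⁻¹ * Y₂ * (Y₁ - Y₂)⁻¹)
    (K L : Matrix (Fin m) (Fin n) ℝ)
    (hK : K = -(F * Z₁) + ((d : ℝ) - 1) • (G * Z₂))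
    (hL : L = -(F * Z₂) + G * Z₁ + ((d : ℝ) - 2) • (G * Z₂)) :
    H22.PosDef
    ∧ IsUnit (Y₁ - Y₂).det
    ∧ IsUnit (Y₁ + ((d : ℝ) - 2) • Y₂).det
    ∧ IsUnit (Y₁ + ((d : ℝ) - 1) • Y₂).det
    ∧ IsUnit (Y₁ - ((d : ℝ) - 1) • (Y₂ * (Y₁ + ((d : ℝ) - 2) • Y₂)⁻¹ * Y₂)).det
    ∧ -(H22⁻¹ * H21)
        = (1 : Matrix (Fin d) (Fin d) ℝ) ⊗ₖ (K - L) + allOnes d ⊗ₖ L := by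
  have hd2 : (2 : ℝ) ≤ (d : ℝ) := by exact_mod_cast hd
  have hdpos : (0 : ℝ) < (d : ℝ) := by linarith
  -- quadratic form inequality from hP
  have q : ∀ (c : Fin d → ℝ) (v : Fin n → ℝ),
      0 ≤ (c ⬝ᵥ c) * (v ⬝ᵥ (P₁ - P₂) *ᵥ v) + (∑ i, c i) ^ 2 * (v ⬝ᵥ P₂ *ᵥ v) := by
    intro c v
    have h := hP.dotProduct_mulVec_nonneg (fun p : Fin d × Fin n => c p.1 * v p.2)
    rw [star_trivial, add_mulVec, dotProduct_add] at h
    have e1 := kron_quad (1 : Matrix (Fin d) (Fin d) ℝ) (P₁ - P₂) c v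
    have e2 := kron_quad (allOnes d) P₂ c v
    rw [e1, e2, allOnes_quad, Matrix.one_mulVec] at h
    exact h
  -- positive semidefiniteness of P₁ - P₂
  have hPS : (P₁ - P₂).PosSemidef := by
    rw [posSemidef_iff_dotProduct_mulVec]
    constructor
    · show _ = _
      rw [conjTranspose_eq_transpose_of_trivial, transpose_sub, hP₁.eq, hP₂.eq]
    · intro v
      rw [star_trivial]
      set i0 : Fin d := ⟨0, by omega⟩
      set i1 : Fin d := ⟨1, by omega⟩
      have hne : i0 ≠ i1 := by simp [i0, i1, Fin.ext_iff]
      set c : Fin d → ℝ := Pi.single i0 1 - Pi.single i1 1 with hc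
      have sc : (∑ i, c i) = 0 := by
        simp [hc, Finset.sum_sub_distrib]
      have cc : c ⬝ᵥ c = 2 := by
        simp only [hc, dotProduct, Pi.sub_apply, Pi.single_apply]
        rw [Finset.sum_congr rfl (fun i _ => by ring :
          ∀ i ∈ Finset.univ, ((if i = i0 then (1:ℝ) else 0) - if i = i1 then 1 else 0)
            * ((if i = i0 then (1:ℝ) else 0) - if i = i1 then 1 else 0)
          = (if i = i0 then (1:ℝ) else 0) * (if i = i0 then (1:ℝ) else 0)
            + (if i = i1 then (1:ℝ) else 0) * (if i = i1 then 1 else 0)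
            - 2 * ((if i = i0 then (1:ℝ) else 0) * (if i = i1 then (1:ℝ) else 0)))]
        simp [Finset.sum_sub_distrib, Finset.sum_add_distrib, ite_mul, mul_ite,
          Finset.sum_ite_eq', hne, Ne.symm hne]
        norm_num
      have := q c v
      rw [sc, cc] at this
      nlinarith [this]
  -- positive semidefiniteness of P₁ + (d-1) P₂
  have hPT : (P₁ + ((d : ℝ) - 1) • P₂).PosSemidef := by
    rw [posSemidef_iff_dotProduct_mulVec]
    constructor
    · show _ = _
      rw [conjTranspose_eq_transpose_of_trivial, transpose_add, transpose_smul, hP₁.eq, hP₂.eq]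
    · intro v
      rw [star_trivial]
      have hq := q (fun _ => 1) v
      have cc : (fun _ : Fin d => (1:ℝ)) ⬝ᵥ (fun _ => 1) = (d : ℝ) := by
        simp [dotProduct]
      have sc : (∑ _i : Fin d, (1:ℝ)) = (d : ℝ) := by simp
      rw [cc, sc] at hq
      have expand : v ⬝ᵥ (P₁ + ((d : ℝ) - 1) • P₂) *ᵥ v
          = v ⬝ᵥ (P₁ - P₂) *ᵥ v + (d : ℝ) * (v ⬝ᵥ P₂ *ᵥ v) := by
        rw [add_mulVec, sub_mulVec, dotProduct_add, dotProduct_sub, smul_mulVec,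
          dotProduct_smul, smul_eq_mul]
        ring
      rw [expand]
      nlinarith [hq]
  -- Positive definiteness of the three scalar-combination matrices
  have hconj : ∀ {P : Matrix (Fin n) (Fin n) ℝ}, P.PosSemidef → (Bᵀ * P * B).PosSemidef := by
    intro P hPsd
    have := hPsd.conjTranspose_mul_mul_same B
    rwa [conjTranspose_eq_transpose_of_trivial] at this
  have hSdecomp : Y₁ - Y₂ = R + Bᵀ * (P₁ - P₂) * B := by
    rw [hY₁, hY₂, Matrix.mul_sub, Matrix.sub_mul]
    abel
  have hSpd : (Y₁ - Y₂).PosDef := by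
    rw [hSdecomp]; exact hR.add_posSemidef (hconj hPS)
  have hTdecomp : Y₁ + ((d : ℝ) - 1) • Y₂ = R + Bᵀ * (P₁ + ((d : ℝ) - 1) • P₂) * B := by
    rw [hY₁, hY₂, Matrix.mul_add, Matrix.add_mul, Matrix.mul_smul, Matrix.smul_mul]
    abel
  have hTpd : (Y₁ + ((d : ℝ) - 1) • Y₂).PosDef := by
    rw [hTdecomp]; exact hR.add_posSemidef (hconj hPT)
  have hWpd : (Y₁ + ((d : ℝ) - 2) • Y₂).PosDef := by
    have hcomb : (Y₁ + ((d : ℝ) - 2) • Y₂)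
        = (d : ℝ)⁻¹ • ((Y₁ - Y₂) + ((d : ℝ) - 1) • (Y₁ + ((d : ℝ) - 1) • Y₂)) := by
      have hd0 : (d : ℝ) ≠ 0 := ne_of_gt hdpos
      match_scalars <;> field_simp <;> ring
    rw [hcomb]
    exact posDef_smul (hSpd.add (posDef_smul hTpd (by linarith)))
      (by positivity)
  have hsu : IsUnit (Y₁ - Y₂).det := isUnit_iff_ne_zero.mpr hSpd.det_pos.ne'
  have htu : IsUnit (Y₁ + ((d : ℝ) - 1) • Y₂).det := isUnit_iff_ne_zero.mpr hTpd.det_pos.ne'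
  have hwu : IsUnit (Y₁ + ((d : ℝ) - 2) • Y₂).det := isUnit_iff_ne_zero.mpr hWpd.det_pos.ne'
  have hWW : (Y₁ + ((d : ℝ) - 2) • Y₂) * (Y₁ + ((d : ℝ) - 2) • Y₂)⁻¹ = 1 :=
    Matrix.mul_nonsing_inv _ hwu
  have hW'W : (Y₁ + ((d : ℝ) - 2) • Y₂)⁻¹ * (Y₁ + ((d : ℝ) - 2) • Y₂) = 1 :=
    Matrix.nonsing_inv_mul _ hwu
  have hTT : (Y₁ + ((d : ℝ) - 1) • Y₂) * (Y₁ + ((d : ℝ) - 1) • Y₂)⁻¹ = 1 :=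
    Matrix.mul_nonsing_inv _ htu
  have hT'T : (Y₁ + ((d : ℝ) - 1) • Y₂)⁻¹ * (Y₁ + ((d : ℝ) - 1) • Y₂) = 1 :=
    Matrix.nonsing_inv_mul _ htu
  have hSS : (Y₁ - Y₂) * (Y₁ - Y₂)⁻¹ = 1 := Matrix.mul_nonsing_inv _ hsu
  have hS'S : (Y₁ - Y₂)⁻¹ * (Y₁ - Y₂) = 1 := Matrix.nonsing_inv_mul _ hsu
  have hFinv : Y₁ - ((d : ℝ) - 1) • (Y₂ * (Y₁ + ((d : ℝ) - 2) • Y₂)⁻¹ * Y₂)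
      = (Y₁ - Y₂) * (Y₁ + ((d : ℝ) - 2) • Y₂)⁻¹ * (Y₁ + ((d : ℝ) - 1) • Y₂) := by
    set W := Y₁ + ((d : ℝ) - 2) • Y₂ with hWdef
    have e1 : Y₁ - Y₂ = W - ((d : ℝ) - 1) • Y₂ := by rw [hWdef]; module
    have e2 : Y₁ + ((d : ℝ) - 1) • Y₂ = W + Y₂ := by rw [hWdef]; module
    rw [e1, e2]
    simp only [Matrix.sub_mul, Matrix.mul_add, Matrix.smul_mul, Matrix.mul_assoc,
      hW'W, Matrix.mul_one, Matrix.one_mul]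
    simp only [← Matrix.mul_assoc, hWW, Matrix.one_mul]
    rw [hWdef]
    module
  have hfu : IsUnit (Y₁ - ((d : ℝ) - 1) • (Y₂ * (Y₁ + ((d : ℝ) - 2) • Y₂)⁻¹ * Y₂)).det := by
    rw [hFinv, Matrix.det_mul, Matrix.det_mul]
    exact (hsu.mul (Matrix.isUnit_nonsing_inv_det _ hwu)).mul htu
  -- positive definiteness of H22
  have hkb : ((1 : Matrix (Fin d) (Fin d) ℝ) ⊗ₖ B)ᵀ
      = (1 : Matrix (Fin d) (Fin d) ℝ) ⊗ₖ Bᵀ := by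
    rw [← Matrix.kroneckerMap_transpose, Matrix.transpose_one]
  have hdecomp : H22 = (1 : Matrix (Fin d) (Fin d) ℝ) ⊗ₖ R
      + ((1 : Matrix (Fin d) (Fin d) ℝ) ⊗ₖ B)ᵀ
        * ((1 : Matrix (Fin d) (Fin d) ℝ) ⊗ₖ (P₁ - P₂) + allOnes d ⊗ₖ P₂)
        * ((1 : Matrix (Fin d) (Fin d) ℝ) ⊗ₖ B) := by
    rw [hH22, hkb, Matrix.mul_add, Matrix.add_mul]
    simp only [← Matrix.mul_kronecker_mul, Matrix.one_mul, Matrix.mul_one]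
    rw [hSdecomp, hY₂, Matrix.kronecker_add]
    abel
  have hH22pd : H22.PosDef := by
    rw [hdecomp]
    refine (posDef_one_kronecker hR).add_posSemidef ?_
    have := hP.conjTranspose_mul_mul_same ((1 : Matrix (Fin d) (Fin d) ℝ) ⊗ₖ B)
    rwa [conjTranspose_eq_transpose_of_trivial] at this
  -- cancellation helpers
  have cT : ∀ X : Matrix (Fin m) (Fin m) ℝ,
      (Y₁ + ((d : ℝ) - 1) • Y₂) * ((Y₁ + ((d : ℝ) - 1) • Y₂)⁻¹ * X) = X := fun X => by
    rw [← Matrix.mul_assoc, hTT, Matrix.one_mul]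
  have cT' : ∀ X : Matrix (Fin m) (Fin m) ℝ,
      (Y₁ + ((d : ℝ) - 1) • Y₂)⁻¹ * ((Y₁ + ((d : ℝ) - 1) • Y₂) * X) = X := fun X => by
    rw [← Matrix.mul_assoc, hT'T, Matrix.one_mul]
  -- explicit form of F
  have hFeq : F = (Y₁ + ((d : ℝ) - 1) • Y₂)⁻¹ * (Y₁ + ((d : ℝ) - 2) • Y₂) * (Y₁ - Y₂)⁻¹ := by
    rw [hF, hFinv, Matrix.mul_inv_rev, Matrix.mul_inv_rev,
      Matrix.nonsing_inv_nonsing_inv _ hwu, Matrix.mul_assoc]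
  -- identity I1 : F + G = (Y₁ - Y₂)⁻¹
  have hFG : F + G = (Y₁ - Y₂)⁻¹ := by
    rw [hFeq, hG]
    have e : (Y₁ + ((d : ℝ) - 1) • Y₂)⁻¹ * (Y₁ + ((d : ℝ) - 2) • Y₂) * (Y₁ - Y₂)⁻¹
          + (Y₁ + ((d : ℝ) - 1) • Y₂)⁻¹ * Y₂ * (Y₁ - Y₂)⁻¹
        = (Y₁ + ((d : ℝ) - 1) • Y₂)⁻¹ * ((Y₁ + ((d : ℝ) - 1) • Y₂) * (Y₁ - Y₂)⁻¹) := by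
      simp only [Matrix.mul_assoc, ← Matrix.mul_add]
      congr 1
      rw [← Matrix.add_mul]
      congr 1
      module
    rw [e, cT']
  have hI1 : (Y₁ - Y₂) * (F + G) = 1 := by rw [hFG, hSS]
  -- identity I2b : Y₂ F = (Y₁ + (d-2) Y₂) G
  have hcore : Y₂ * (Y₁ + ((d : ℝ) - 1) • Y₂)⁻¹ * (Y₁ + ((d : ℝ) - 2) • Y₂)
      = (Y₁ + ((d : ℝ) - 2) • Y₂) * (Y₁ + ((d : ℝ) - 1) • Y₂)⁻¹ * Y₂ := by
    rw [show Y₁ + ((d : ℝ) - 2) • Y₂ = (Y₁ + ((d : ℝ) - 1) • Y₂) - Y₂ by module]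
    simp only [Matrix.mul_sub, Matrix.sub_mul, Matrix.mul_assoc, cT, cT', hT'T,
      Matrix.mul_one, Matrix.one_mul]
  have hI2b : Y₂ * F = (Y₁ + ((d : ℝ) - 2) • Y₂) * G := by
    rw [hFeq, hG, ← Matrix.mul_assoc, ← Matrix.mul_assoc, ← Matrix.mul_assoc, hcore]
    simp only [Matrix.mul_assoc]
  -- identity : Y₁ F = 1 + (d-1) Y₂ G
  have hYF : Y₁ * F = 1 + ((d : ℝ) - 1) • (Y₂ * G) := by
    have e : Y₁ * F = (Y₁ - Y₂) * F + Y₂ * F := by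
      simp only [Matrix.sub_mul]; abel
    rw [e, hI2b,
      show (Y₁ + ((d : ℝ) - 2) • Y₂) * G
          = (Y₁ - Y₂) * G + ((d : ℝ) - 1) • (Y₂ * G) by
        simp only [Matrix.add_mul, Matrix.sub_mul, Matrix.smul_mul]; module,
      ← hI1, Matrix.mul_add]
    abel
  -- block identity E1
  have hKL : K - L = -((F + G) * (Z₁ - Z₂)) := by
    rw [hK, hL]
    simp only [Matrix.add_mul, Matrix.mul_sub]
    module
  have hE1 : (Y₁ - Y₂) * (K - L) = -(Z₁ - Z₂) := by
    rw [hKL, Matrix.mul_neg, ← Matrix.mul_assoc, hI1, Matrix.one_mul]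
  -- block identity E2
  have hWF : (Y₁ + ((d : ℝ) - 2) • Y₂) * F
      = 1 + ((d : ℝ) - 1) • (Y₂ * G) + ((d : ℝ) - 2) • (Y₂ * F) := by
    rw [Matrix.add_mul, Matrix.smul_mul, hYF]
  have hE2' : Y₂ * K + (Y₁ + ((d : ℝ) - 2) • Y₂) * L = -Z₂ := by
    rw [hK, hL]
    simp only [Matrix.mul_add, Matrix.mul_neg, Matrix.mul_smul, ← Matrix.mul_assoc,
      hI2b, hWF]
    simp only [Matrix.add_mul, Matrix.smul_mul, Matrix.one_mul]
    module
  have hE2 : (Y₁ - Y₂) * L + Y₂ * (K - L) + (d : ℝ) • (Y₂ * L) = -Z₂ := by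
    rw [show (Y₁ - Y₂) * L + Y₂ * (K - L) + (d : ℝ) • (Y₂ * L)
        = Y₂ * K + (Y₁ + ((d : ℝ) - 2) • Y₂) * L by
      simp only [Matrix.sub_mul, Matrix.mul_sub, Matrix.add_mul, Matrix.smul_mul]
      module]
    exact hE2'
  -- assembling the final identity
  have hprod : H22 * ((1 : Matrix (Fin d) (Fin d) ℝ) ⊗ₖ (K - L) + allOnes d ⊗ₖ L)
      = (1 : Matrix (Fin d) (Fin d) ℝ) ⊗ₖ ((Y₁ - Y₂) * (K - L))
        + allOnes d ⊗ₖ ((Y₁ - Y₂) * L + Y₂ * (K - L) + (d : ℝ) • (Y₂ * L)) := by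
    rw [hH22, Matrix.add_mul, Matrix.mul_add, Matrix.mul_add]
    simp only [← Matrix.mul_kronecker_mul, Matrix.one_mul, Matrix.mul_one,
      allOnes_mul_allOnes, smul_kronecker, kronecker_add, kronecker_smul]
    abel
  have hX : H22 * ((1 : Matrix (Fin d) (Fin d) ℝ) ⊗ₖ (K - L) + allOnes d ⊗ₖ L) = -H21 := by
    rw [hprod, hE1, hE2, hH21, kronecker_neg', kronecker_neg', neg_add]
  have h22u : IsUnit H22.det := isUnit_iff_ne_zero.mpr hH22pd.det_pos.ne'
  refine ⟨hH22pd, hsu, hwu, htu, hfu, ?_⟩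
  calc -(H22⁻¹ * H21) = H22⁻¹ * (-H21) := by rw [Matrix.mul_neg]
    _ = H22⁻¹ * (H22 * ((1 : Matrix (Fin d) (Fin d) ℝ) ⊗ₖ (K - L) + allOnes d ⊗ₖ L)) := by
        rw [hX]
    _ = (1 : Matrix (Fin d) (Fin d) ℝ) ⊗ₖ (K - L) + allOnes d ⊗ₖ L := by
        rw [← Matrix.mul_assoc, Matrix.nonsing_inv_mul _ h22u, Matrix.one_mul]
end
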